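/- Under the simple Lehmann model S(t1,t2 | z) = (S⁰(t1,t2))^{c} with c = exp(bᵀz), the double-failure hazard satisfies λ11(t1,t2 | z) = c·λ11⁰(t1,t2) − λ10⁰(t1,t2)·λ01⁰(t1,t2)·(c − c²), where λ11(t1,t2|z) = (∂²S(t1,t2|z)/∂t1∂t2)/S(t1,t2|z). -/

import Mathlib

/-- Under the simple Lehmann model `S(t1,t2|z) = (S⁰(t1,t2))^c`
with `c = exp(bᵀz)`, the double-failure hazard satisfies
`λ11(t1,t2|z) = c·λ11⁰ − λ10⁰·λ01⁰·(c − c²)`. -/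
theorem stmt_3 (p : ℕ) (S0 : ℝ → ℝ → ℝ) (b z : Fin p → ℝ)
    (hpos : ∀ t1 t2, 0 < S0 t1 t2) (hle : ∀ t1 t2, S0 t1 t2 ≤ 1)
    (hsmooth : ContDiff ℝ 2 (fun q : ℝ × ℝ => S0 q.1 q.2))
    (c : ℝ) (hc : c = Real.exp (∑ i, b i * z i)) :
    ∀ t1 t2 : ℝ,
      (deriv (fun v => deriv (fun u => (S0 u v) ^ c) t1) t2) / ((S0 t1 t2) ^ c)
        = c * ((deriv (fun v => deriv (fun u => S0 u v) t1) t2) / S0 t1 t2)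
          - (-(deriv (fun u => S0 u t2) t1) / S0 t1 t2)
            * (-(deriv (fun v => S0 t1 v) t2) / S0 t1 t2) * (c - c ^ 2) := by
  intro t1 t2
  set F : ℝ × ℝ → ℝ := fun q => S0 q.1 q.2 with hFdef
  have hFdiff : Differentiable ℝ F := hsmooth.differentiable (by norm_num)
  set G : ℝ × ℝ → ℝ := fun q => fderiv ℝ F q (1, 0) with hGdef
  set G2 : ℝ × ℝ → ℝ := fun q => fderiv ℝ F q (0, 1) with hG2def
  have hGcd : ContDiff ℝ 1 G :=
    (hsmooth.fderiv_right (by norm_num)).clm_apply contDiff_const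
  -- partial derivative in the first variable
  have hline1 : ∀ v u, HasDerivAt (fun u => S0 u v) (G (u, v)) u := by
    intro v u
    have hγ : HasDerivAt (fun u : ℝ => (u, v)) ((1 : ℝ), (0 : ℝ)) u :=
      HasDerivAt.prodMk (hasDerivAt_id u) (hasDerivAt_const u v)
    have h := (hFdiff (u, v)).hasFDerivAt.comp_hasDerivAt u hγ
    simpa [hGdef, Function.comp_def] using h
  -- partial derivative in the second variable
  have hline2 : ∀ u v, HasDerivAt (fun v => S0 u v) (G2 (u, v)) v := by
    intro u v
    have hγ : HasDerivAt (fun v : ℝ => (u, v)) ((0 : ℝ), (1 : ℝ)) v :=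
      HasDerivAt.prodMk (hasDerivAt_const v u) (hasDerivAt_id v)
    have h := (hFdiff (u, v)).hasFDerivAt.comp_hasDerivAt v hγ
    simpa [hGdef, Function.comp_def] using h
  -- v ↦ G (t1, v) is differentiable
  have hGline : DifferentiableAt ℝ (fun v => G (t1, v)) t2 := by
    have h1 : Differentiable ℝ G := hGcd.differentiable one_ne_zero
    have h2 : Differentiable ℝ (fun v : ℝ => ((t1, v) : ℝ × ℝ)) := by fun_prop
    exact (h1.comp h2) t2
  set d12 : ℝ := deriv (fun v => G (t1, v)) t2 with hd12def
  have hd12 : HasDerivAt (fun v => G (t1, v)) d12 t2 := hGline.hasDerivAt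
  -- the inner derivative of the powered survival function
  have hinner : (fun v => deriv (fun u => (S0 u v) ^ c) t1)
      = fun v => c * ((S0 t1 v) ^ (c - 1) * G (t1, v)) := by
    funext v
    have h1 : HasDerivAt (fun u => S0 u v) (G (t1, v)) t1 := hline1 v t1
    have h2 : HasDerivAt (fun u => (S0 u v) ^ c)
        ((c * (S0 t1 v) ^ (c - 1)) * G (t1, v)) t1 := by
      have hr := Real.hasDerivAt_rpow_const (x := S0 t1 v) (p := c)
        (Or.inl (hpos t1 v).ne')
      simpa [Function.comp_def] using hr.comp t1 h1
    rw [h2.deriv]; ring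
  -- derivative facts at (t1, t2)
  have hS2 : HasDerivAt (fun v => S0 t1 v) (G2 (t1, t2)) t2 := hline2 t1 t2
  have hpow1 : HasDerivAt (fun v => (S0 t1 v) ^ (c - 1))
      (((c - 1) * (S0 t1 t2) ^ (c - 1 - 1)) * G2 (t1, t2)) t2 := by
    have hr := Real.hasDerivAt_rpow_const (x := S0 t1 t2) (p := c - 1)
      (Or.inl (hpos t1 t2).ne')
    simpa [Function.comp_def] using hr.comp t2 hS2
  have houter : HasDerivAt (fun v => c * ((S0 t1 v) ^ (c - 1) * G (t1, v)))
      (c * ((((c - 1) * (S0 t1 t2) ^ (c - 1 - 1)) * G2 (t1, t2)) * G (t1, t2)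
        + (S0 t1 t2) ^ (c - 1) * d12)) t2 :=
    (hpow1.mul hd12).const_mul c
  -- rewrite all four deriv expressions in the goal
  have e0 : deriv (fun v => deriv (fun u => (S0 u v) ^ c) t1) t2
      = c * ((((c - 1) * (S0 t1 t2) ^ (c - 1 - 1)) * G2 (t1, t2)) * G (t1, t2)
        + (S0 t1 t2) ^ (c - 1) * d12) := by
    rw [hinner]; exact houter.deriv
  have e1 : deriv (fun v => deriv (fun u => S0 u v) t1) t2 = d12 := by
    have : (fun v => deriv (fun u => S0 u v) t1) = fun v => G (t1, v) := by
      funext v; exact (hline1 v t1).deriv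
    rw [this]
  have e2 : deriv (fun u => S0 u t2) t1 = G (t1, t2) := (hline1 t2 t1).deriv
  have e3 : deriv (fun v => S0 t1 v) t2 = G2 (t1, t2) := hS2.deriv
  rw [e0, e1, e2, e3]
  -- pure algebra with rpow
  have hA : (0 : ℝ) < S0 t1 t2 := hpos t1 t2
  have hAne : S0 t1 t2 ≠ 0 := hA.ne'
  have hAc : (0 : ℝ) < (S0 t1 t2) ^ c := Real.rpow_pos_of_pos hA c
  have r1 : (S0 t1 t2) ^ (c - 1) = (S0 t1 t2) ^ c / S0 t1 t2 := by
    rw [Real.rpow_sub hA, Real.rpow_one]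
  have r2 : (S0 t1 t2) ^ (c - 1 - 1) = (S0 t1 t2) ^ c / (S0 t1 t2 * S0 t1 t2) := by
    rw [Real.rpow_sub hA, Real.rpow_sub hA, Real.rpow_one, div_div]
  rw [r1, r2]
  field_simp
  ring
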